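/- Let a < b be real numbers and h : ℂ → ℂ be continuous on the closed strip {s : a ≤ Re s ≤ b} and holomorphic on the open strip {s : a < Re s < b}. Suppose there exist constants A, B ≥ 0 and 0 < γ < π/(b−a) such that |h(s)| ≤ A·exp(B·exp(γ·|Im s|)) for all s in the closed strip. Let E, F > 0 and P, α, β be real constants with P + a > 0 and α ≥ β, and suppose that |h(a+it)| ≤ E·|P+a+it|^α and |h(b+it)| ≤ F·|P+b+it|^β for all t ∈ ℝ. Then for all σ with a < σ < b and all t ∈ ℝ, one has |h(σ+it)| ≤ (E·|P+σ+it|^α)^{(b−σ)/(b−a)} · (F·|P+σ+it|^β)^{(σ−a)/(b−a)}. -/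

import Mathlib

open Complex Real

private lemma relog_mono (u v : ℂ) (hu : 0 < u.re) (hv : 0 < v.re) :
    0 ≤ ((starRingEnd ℂ) (v - u) * (Complex.log v - Complex.log u)).re := by
  rcases eq_or_ne v u with rfl | hne
  · simp
  set Δ : ℂ := v - u with hΔ
  have hre : ∀ τ : ℝ, τ ∈ Set.Icc (0:ℝ) 1 → 0 < (u + (τ:ℂ) * Δ).re := by
    intro τ hτ
    have : (u + (τ:ℂ) * Δ).re = (1 - τ) * u.re + τ * v.re := by
      simp [hΔ, Complex.add_re, Complex.mul_re, Complex.sub_re, Complex.ofReal_re,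
        Complex.ofReal_im]
      ring
    rw [this]
    rcases lt_or_ge τ 1 with hτ1 | hτ1
    · nlinarith [hτ.1, hτ.2]
    · nlinarith [hτ.1, hτ.2]
  have hderiv : ∀ τ : ℝ, τ ∈ Set.uIcc (0:ℝ) 1 →
      HasDerivAt (fun τ : ℝ => Complex.log (u + (τ:ℂ) * Δ)) (Δ * (u + (τ:ℂ) * Δ)⁻¹) τ := by
    intro τ hτ
    rw [Set.uIcc_of_le (by norm_num : (0:ℝ) ≤ 1)] at hτ
    have hmem : (u + (τ:ℂ) * Δ) ∈ Complex.slitPlane :=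
      Complex.mem_slitPlane_iff.2 (Or.inl (hre τ hτ))
    have hinner : HasDerivAt (fun z : ℂ => u + z * Δ) Δ (τ:ℂ) := by
      simpa using ((hasDerivAt_id ((τ:ℝ):ℂ)).mul_const Δ).const_add u
    have hlog : HasDerivAt Complex.log (u + (τ:ℂ) * Δ)⁻¹ (u + (τ:ℂ) * Δ) :=
      Complex.hasDerivAt_log hmem
    have := (hlog.comp (τ:ℂ) hinner).comp_ofReal
    simpa [mul_comm] using this
  have hcont : ContinuousOn (fun τ : ℝ => Δ * (u + (τ:ℂ) * Δ)⁻¹) (Set.uIcc (0:ℝ) 1) := by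
    rw [Set.uIcc_of_le (by norm_num : (0:ℝ) ≤ 1)]
    refine continuousOn_const.mul (ContinuousOn.inv₀ (by fun_prop) ?_)
    intro τ hτ h0
    have := hre τ hτ
    rw [h0] at this
    simp at this
  have hint : IntervalIntegrable (fun τ : ℝ => Δ * (u + (τ:ℂ) * Δ)⁻¹)
      MeasureTheory.volume 0 1 := hcont.intervalIntegrable
  have hftc : ∫ τ in (0:ℝ)..1, Δ * (u + (τ:ℂ) * Δ)⁻¹ =
      Complex.log v - Complex.log u := by
    rw [intervalIntegral.integral_eq_sub_of_hasDerivAt hderiv hint]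
    norm_num [hΔ]
  have key : ((starRingEnd ℂ) Δ * (Complex.log v - Complex.log u)).re =
      ∫ τ in (0:ℝ)..1, ((starRingEnd ℂ) Δ * (Δ * (u + (τ:ℂ) * Δ)⁻¹)).re := by
    rw [← hftc, ← intervalIntegral.integral_const_mul]
    exact (ContinuousLinearMap.intervalIntegral_comp_comm Complex.reCLM
      (hint.const_mul _)).symm
  rw [key]
  apply intervalIntegral.integral_nonneg (by norm_num)
  intro τ hτ
  have h1 : ((starRingEnd ℂ) Δ * (Δ * (u + (τ:ℂ) * Δ)⁻¹)).re
      = Complex.normSq Δ * ((u + (τ:ℂ) * Δ)⁻¹).re := by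
    rw [← mul_assoc, mul_comm ((starRingEnd ℂ) Δ) Δ, Complex.mul_conj]
    simp [Complex.mul_re, Complex.ofReal_re, Complex.ofReal_im]
  rw [h1]
  apply mul_nonneg (Complex.normSq_nonneg _)
  rw [Complex.inv_re]
  exact div_nonneg (hre τ hτ).le (Complex.normSq_nonneg _)

private lemma le_mul_one_add (p q x : ℝ) (hx : 0 ≤ x) (hp : 0 ≤ p) (hq : 0 ≤ q) :
    p + q * x ≤ (p + q) * (1 + x) := by nlinarith

private lemma mul_one_add_le_sq (c x : ℝ) (hc : 0 ≤ c) (hx : 0 ≤ x) :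
    c * (1 + x) ≤ c * (1 + x) ^ 2 := by
  nlinarith [mul_nonneg (mul_nonneg hc (by linarith : (0:ℝ) ≤ 1 + x)) hx]

private lemma sq_le_exp (γ x : ℝ) (hγ : 0 < γ) (hx : 0 ≤ x) :
    (1 + x) ^ 2 ≤ (1 + 2/γ + 4/γ^2) * Real.exp (γ * x) := by
  have h1 : 1 ≤ Real.exp (γ * x) := Real.one_le_exp (by positivity)
  have h3 : (γ * x / 2) ≤ Real.exp (γ * x / 2) := by
    have := Real.add_one_le_exp (γ * x / 2); linarith
  have h4 : (γ * x / 2)^2 ≤ Real.exp (γ * x) := by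
    calc (γ * x / 2)^2 ≤ Real.exp (γ * x / 2)^2 := by
          have h0 : 0 ≤ γ * x / 2 := by positivity
          nlinarith
      _ = Real.exp (γ * x) := by
          rw [sq, ← Real.exp_add]; ring_nf
  have hxx : x^2 ≤ 4 / γ^2 * Real.exp (γ * x) := by
    have h5 : x^2 = (γ * x / 2)^2 * (4 / γ^2) := by field_simp; ring
    rw [h5]
    calc (γ * x / 2)^2 * (4/γ^2) ≤ Real.exp (γ*x) * (4/γ^2) :=
          mul_le_mul_of_nonneg_right h4 (by positivity)
      _ = 4/γ^2 * Real.exp (γ*x) := by ring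
  have hx1 : 2 * x ≤ 2 / γ * Real.exp (γ * x) := by
    rw [div_mul_eq_mul_div, le_div_iff₀ hγ]
    have h2 := Real.add_one_le_exp (γ * x)
    nlinarith
  nlinarith [Real.exp_nonneg (γ * x)]

set_option maxHeartbeats 1600000 in
private lemma aux_norm_bound (a b P lE cl β m : ℝ) (w₀ L₀ z₀ : ℂ)
    (hm : 0 ≤ m) (hPa : 0 < P + a) (hab : a < b) :
    ∃ K : ℝ, 0 ≤ K ∧ ∀ ζ : ℂ, a ≤ ζ.re → ζ.re ≤ b →
      ‖-((lE : ℂ) + (cl : ℂ) * (ζ - (a:ℂ)))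
        - ((β:ℂ) + (m:ℂ) * ((b:ℂ) - ζ)) * Complex.log ((P:ℂ) + ζ)
        - ((m/2 : ℝ) : ℂ) * (((P:ℂ) + ζ) * Complex.log ((P:ℂ) + ζ))
        + ((m/2 : ℝ) : ℂ) * ((starRingEnd ℂ) w₀ * Complex.log ((P:ℂ) + ζ)
            + (starRingEnd ℂ) L₀ * (ζ - z₀))‖ ≤ K * (1 + |ζ.im|) ^ 2 := by
  set M1 : ℝ := |a| + |b| + 1 with hM1_def
  set M2 : ℝ := |P| + M1 + 1 with hM2_def
  set M3 : ℝ := |Real.log (P + a)| + Real.pi + M2 + 1 with hM3_def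
  set C1 : ℝ := |lE| + |cl| * (M1 + |a|) + |cl| with hC1_def
  set C2 : ℝ := |β| + m * (|b| + M1) + m with hC2_def
  set C5 : ℝ := M1 + ‖z₀‖ + 1 with hC5_def
  have hM1p : (0:ℝ) ≤ M1 := by positivity
  have hM2p : (0:ℝ) ≤ M2 := by positivity
  have hM3p : (0:ℝ) ≤ M3 := by positivity
  have hC1p : (0:ℝ) ≤ C1 := by positivity
  have hC2p : (0:ℝ) ≤ C2 := by rw [hC2_def]; positivity
  have hC5p : (0:ℝ) ≤ C5 := by positivity
  have hw₀n : (0:ℝ) ≤ ‖w₀‖ := norm_nonneg _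
  have hL₀n : (0:ℝ) ≤ ‖L₀‖ := norm_nonneg _
  refine ⟨C1 + C2 * M3 + m/2 * (M2 * M3) + m/2 * (‖w₀‖ * M3 + ‖L₀‖ * C5), ?_, ?_⟩
  · have h3 : (0:ℝ) ≤ m/2 := by linarith
    positivity
  intro ζ hζa hζb
  set x : ℝ := |ζ.im| with hx_def
  have hx0 : 0 ≤ x := abs_nonneg _
  have hζre : |ζ.re| ≤ |a| + |b| := by
    rw [abs_le]
    constructor
    · have h1 := neg_abs_le a
      have h2 := abs_nonneg b
      linarith
    · have h1 := le_abs_self b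
      have h2 := abs_nonneg a
      linarith
  have hζn : ‖ζ‖ ≤ M1 + x := by
    calc ‖ζ‖ ≤ |ζ.re| + |ζ.im| := Complex.norm_le_abs_re_add_abs_im ζ
      _ ≤ M1 + x := by rw [hM1_def]; linarith
  have hwn : ‖(P:ℂ) + ζ‖ ≤ M2 + x := by
    calc ‖(P:ℂ) + ζ‖ ≤ ‖(P:ℂ)‖ + ‖ζ‖ := norm_add_le _ _
      _ ≤ |P| + (M1 + x) := by rw [Complex.norm_real, Real.norm_eq_abs]; linarith
      _ ≤ M2 + x := by rw [hM2_def]; linarith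
  have hawge : P + a ≤ ‖(P:ℂ) + ζ‖ := by
    have h1 : P + a ≤ ((P:ℂ) + ζ).re := by
      simp only [Complex.add_re, Complex.ofReal_re]; linarith
    exact le_trans h1 (Complex.re_le_norm _)
  have hawpos : (0:ℝ) < ‖(P:ℂ) + ζ‖ := lt_of_lt_of_le hPa hawge
  have hLn : ‖Complex.log ((P:ℂ) + ζ)‖ ≤ M3 + x := by
    have hup : Real.log (‖(P:ℂ) + ζ‖) ≤ M2 + x :=
      le_trans (Real.log_le_self hawpos.le) hwn
    have hlow : Real.log (P + a) ≤ Real.log (‖(P:ℂ) + ζ‖) :=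
      Real.log_le_log hPa hawge
    have hlogabs : |Real.log (‖(P:ℂ) + ζ‖)| ≤ |Real.log (P + a)| + (M2 + x) := by
      rw [abs_le]
      constructor
      · have h6 := neg_abs_le (Real.log (P + a))
        have h7 : (0:ℝ) ≤ M2 + x := by linarith
        linarith
      · have := abs_nonneg (Real.log (P + a))
        linarith
    calc ‖Complex.log ((P:ℂ) + ζ)‖
        ≤ |(Complex.log ((P:ℂ) + ζ)).re| + |(Complex.log ((P:ℂ) + ζ)).im| :=
          Complex.norm_le_abs_re_add_abs_im _
      _ ≤ (|Real.log (P + a)| + (M2 + x)) + Real.pi := by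
          rw [Complex.log_re, Complex.log_im]
          have := Complex.abs_arg_le_pi ((P:ℂ) + ζ)
          linarith
      _ ≤ M3 + x := by rw [hM3_def]; linarith
  have hb1 : ‖(lE : ℂ) + (cl : ℂ) * (ζ - (a:ℂ))‖ ≤ C1 * (1 + x) := by
    have step : ‖(lE : ℂ) + (cl : ℂ) * (ζ - (a:ℂ))‖
        ≤ (|lE| + |cl| * (M1 + |a|)) + |cl| * x := by
      have h8 : ‖ζ - (a:ℂ)‖ ≤ (M1 + |a|) + x := by
        calc ‖ζ - (a:ℂ)‖ ≤ ‖ζ‖ + ‖(a:ℂ)‖ := norm_sub_le _ _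
          _ ≤ (M1 + x) + |a| := by
              rw [Complex.norm_real, Real.norm_eq_abs]; linarith
          _ = (M1 + |a|) + x := by ring
      calc ‖(lE : ℂ) + (cl : ℂ) * (ζ - (a:ℂ))‖
          ≤ ‖(lE:ℂ)‖ + ‖(cl:ℂ)‖ * ‖ζ - (a:ℂ)‖ := by
            refine le_trans (norm_add_le _ _) ?_
            rw [norm_mul]
        _ ≤ |lE| + |cl| * ((M1 + |a|) + x) := by
            rw [Complex.norm_real, Real.norm_eq_abs, Complex.norm_real, Real.norm_eq_abs]
            have h9 := mul_le_mul_of_nonneg_left h8 (abs_nonneg cl)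
            linarith
        _ = (|lE| + |cl| * (M1 + |a|)) + |cl| * x := by ring
    refine le_trans step ?_
    rw [hC1_def]
    have := le_mul_one_add (|lE| + |cl| * (M1 + |a|)) |cl| x hx0
      (by positivity) (abs_nonneg cl)
    linarith [this]
  have hb2 : ‖(β:ℂ) + (m:ℂ) * ((b:ℂ) - ζ)‖ ≤ C2 * (1 + x) := by
    have step : ‖(β:ℂ) + (m:ℂ) * ((b:ℂ) - ζ)‖ ≤ (|β| + m * (|b| + M1)) + m * x := by
      have h8 : ‖(b:ℂ) - ζ‖ ≤ (|b| + M1) + x := by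
        calc ‖(b:ℂ) - ζ‖ ≤ ‖(b:ℂ)‖ + ‖ζ‖ := norm_sub_le _ _
          _ ≤ |b| + (M1 + x) := by rw [Complex.norm_real, Real.norm_eq_abs]; linarith
          _ = (|b| + M1) + x := by ring
      calc ‖(β:ℂ) + (m:ℂ) * ((b:ℂ) - ζ)‖
          ≤ ‖(β:ℂ)‖ + ‖(m:ℂ)‖ * ‖(b:ℂ) - ζ‖ := by
            refine le_trans (norm_add_le _ _) ?_
            rw [norm_mul]
        _ ≤ |β| + m * ((|b| + M1) + x) := by
            rw [Complex.norm_real, Real.norm_eq_abs, Complex.norm_real, Real.norm_eq_abs,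
              _root_.abs_of_nonneg hm]
            have h9 := mul_le_mul_of_nonneg_left h8 hm
            linarith
        _ = (|β| + m * (|b| + M1)) + m * x := by ring
    refine le_trans step ?_
    rw [hC2_def]
    have := le_mul_one_add (|β| + m * (|b| + M1)) m x hx0 (by positivity) hm
    linarith [this]
  have hb5 : ‖ζ - z₀‖ ≤ C5 * (1 + x) := by
    have step : ‖ζ - z₀‖ ≤ (M1 + ‖z₀‖) + 1 * x := by
      calc ‖ζ - z₀‖ ≤ ‖ζ‖ + ‖z₀‖ := norm_sub_le _ _
        _ ≤ (M1 + ‖z₀‖) + 1 * x := by linarith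
    refine le_trans step ?_
    rw [hC5_def]
    have := le_mul_one_add (M1 + ‖z₀‖) 1 x hx0 (by positivity) zero_le_one
    linarith [this]
  have hM3y : ‖Complex.log ((P:ℂ) + ζ)‖ ≤ M3 * (1 + x) := by
    have hM31 : 1 ≤ M3 := by
      rw [hM3_def]
      have h1 := abs_nonneg (Real.log (P + a))
      have h2 := Real.pi_nonneg
      linarith
    calc ‖Complex.log ((P:ℂ) + ζ)‖ ≤ M3 + x := hLn
      _ ≤ M3 * (1 + x) := by nlinarith [mul_nonneg (by linarith : (0:ℝ) ≤ M3 - 1) hx0]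
  have hM2y : ‖(P:ℂ) + ζ‖ ≤ M2 * (1 + x) := by
    have hM21 : 1 ≤ M2 := by
      rw [hM2_def]
      have := abs_nonneg P
      linarith
    calc ‖(P:ℂ) + ζ‖ ≤ M2 + x := hwn
      _ ≤ M2 * (1 + x) := by nlinarith [mul_nonneg (by linarith : (0:ℝ) ≤ M2 - 1) hx0]
  -- split the norm
  have hmn : ‖((m/2:ℝ):ℂ)‖ = m/2 := by
    rw [Complex.norm_real, Real.norm_eq_abs, _root_.abs_of_nonneg (by linarith)]
  have key : ‖-((lE : ℂ) + (cl : ℂ) * (ζ - (a:ℂ)))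
        - ((β:ℂ) + (m:ℂ) * ((b:ℂ) - ζ)) * Complex.log ((P:ℂ) + ζ)
        - ((m/2 : ℝ) : ℂ) * (((P:ℂ) + ζ) * Complex.log ((P:ℂ) + ζ))
        + ((m/2 : ℝ) : ℂ) * ((starRingEnd ℂ) w₀ * Complex.log ((P:ℂ) + ζ)
            + (starRingEnd ℂ) L₀ * (ζ - z₀))‖
      ≤ ‖(lE : ℂ) + (cl : ℂ) * (ζ - (a:ℂ))‖
        + ‖(β:ℂ) + (m:ℂ) * ((b:ℂ) - ζ)‖ * ‖Complex.log ((P:ℂ) + ζ)‖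
        + (m/2) * (‖(P:ℂ) + ζ‖ * ‖Complex.log ((P:ℂ) + ζ)‖)
        + (m/2) * (‖w₀‖ * ‖Complex.log ((P:ℂ) + ζ)‖ + ‖L₀‖ * ‖ζ - z₀‖) := by
    have e1 := norm_add_le (-((lE : ℂ) + (cl : ℂ) * (ζ - (a:ℂ)))
        - ((β:ℂ) + (m:ℂ) * ((b:ℂ) - ζ)) * Complex.log ((P:ℂ) + ζ)
        - ((m/2 : ℝ) : ℂ) * (((P:ℂ) + ζ) * Complex.log ((P:ℂ) + ζ)))
        (((m/2 : ℝ) : ℂ) * ((starRingEnd ℂ) w₀ * Complex.log ((P:ℂ) + ζ)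
            + (starRingEnd ℂ) L₀ * (ζ - z₀)))
    have e2 := norm_sub_le (-((lE : ℂ) + (cl : ℂ) * (ζ - (a:ℂ)))
        - ((β:ℂ) + (m:ℂ) * ((b:ℂ) - ζ)) * Complex.log ((P:ℂ) + ζ))
        (((m/2 : ℝ) : ℂ) * (((P:ℂ) + ζ) * Complex.log ((P:ℂ) + ζ)))
    have e3 := norm_sub_le (-((lE : ℂ) + (cl : ℂ) * (ζ - (a:ℂ))))
        (((β:ℂ) + (m:ℂ) * ((b:ℂ) - ζ)) * Complex.log ((P:ℂ) + ζ))
    rw [norm_neg] at e3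
    have e4 : ‖((β:ℂ) + (m:ℂ) * ((b:ℂ) - ζ)) * Complex.log ((P:ℂ) + ζ)‖
        = ‖(β:ℂ) + (m:ℂ) * ((b:ℂ) - ζ)‖ * ‖Complex.log ((P:ℂ) + ζ)‖ := norm_mul _ _
    have e5 : ‖((m/2 : ℝ) : ℂ) * (((P:ℂ) + ζ) * Complex.log ((P:ℂ) + ζ))‖
        = (m/2) * (‖(P:ℂ) + ζ‖ * ‖Complex.log ((P:ℂ) + ζ)‖) := by
      rw [norm_mul, hmn, norm_mul]
    have e6 : ‖((m/2 : ℝ) : ℂ) * ((starRingEnd ℂ) w₀ * Complex.log ((P:ℂ) + ζ)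
        + (starRingEnd ℂ) L₀ * (ζ - z₀))‖
        ≤ (m/2) * (‖w₀‖ * ‖Complex.log ((P:ℂ) + ζ)‖ + ‖L₀‖ * ‖ζ - z₀‖) := by
      rw [norm_mul, hmn]
      refine mul_le_mul_of_nonneg_left ?_ (by linarith : (0:ℝ) ≤ m/2)
      refine le_trans (norm_add_le _ _) ?_
      rw [norm_mul, norm_mul, RCLike.norm_conj, RCLike.norm_conj]
    linarith [e1, e2, e3, e6, e4.le, e4.ge, e5.le, e5.ge]
  refine le_trans key ?_
  have hLnn : (0:ℝ) ≤ ‖Complex.log ((P:ℂ) + ζ)‖ := norm_nonneg _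
  have hy0 : (0:ℝ) ≤ 1 + x := by linarith
  have p1 : ‖(lE : ℂ) + (cl : ℂ) * (ζ - (a:ℂ))‖ ≤ C1 * (1 + x)^2 :=
    le_trans hb1 (mul_one_add_le_sq C1 x hC1p hx0)
  have p2 : ‖(β:ℂ) + (m:ℂ) * ((b:ℂ) - ζ)‖ * ‖Complex.log ((P:ℂ) + ζ)‖
      ≤ (C2 * M3) * (1 + x)^2 := by
    calc ‖(β:ℂ) + (m:ℂ) * ((b:ℂ) - ζ)‖ * ‖Complex.log ((P:ℂ) + ζ)‖
        ≤ (C2 * (1+x)) * (M3 * (1+x)) :=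
          mul_le_mul hb2 hM3y hLnn (by positivity)
      _ = (C2 * M3) * (1 + x)^2 := by ring
  have p3 : ‖(P:ℂ) + ζ‖ * ‖Complex.log ((P:ℂ) + ζ)‖ ≤ (M2 * M3) * (1 + x)^2 := by
    calc ‖(P:ℂ) + ζ‖ * ‖Complex.log ((P:ℂ) + ζ)‖
        ≤ (M2 * (1+x)) * (M3 * (1+x)) :=
          mul_le_mul hM2y hM3y hLnn (by positivity)
      _ = (M2 * M3) * (1 + x)^2 := by ring
  have p4 : ‖w₀‖ * ‖Complex.log ((P:ℂ) + ζ)‖ + ‖L₀‖ * ‖ζ - z₀‖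
      ≤ (‖w₀‖ * M3 + ‖L₀‖ * C5) * (1 + x)^2 := by
    have q1 : ‖w₀‖ * ‖Complex.log ((P:ℂ) + ζ)‖ ≤ ‖w₀‖ * (M3 * (1+x)) :=
      mul_le_mul_of_nonneg_left hM3y hw₀n
    have q2 : ‖L₀‖ * ‖ζ - z₀‖ ≤ ‖L₀‖ * (C5 * (1+x)) :=
      mul_le_mul_of_nonneg_left hb5 hL₀n
    have q3 : ‖w₀‖ * (M3 * (1+x)) ≤ ‖w₀‖ * M3 * (1+x)^2 := by
      have := mul_one_add_le_sq (‖w₀‖ * M3) x (by positivity) hx0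
      nlinarith
    have q4 : ‖L₀‖ * (C5 * (1+x)) ≤ ‖L₀‖ * C5 * (1+x)^2 := by
      have := mul_one_add_le_sq (‖L₀‖ * C5) x (by positivity) hx0
      nlinarith
    nlinarith
  have hm2 : (0:ℝ) ≤ m/2 := by linarith
  have p3' : (m/2) * (‖(P:ℂ) + ζ‖ * ‖Complex.log ((P:ℂ) + ζ)‖)
      ≤ (m/2) * ((M2 * M3) * (1+x)^2) := mul_le_mul_of_nonneg_left p3 hm2
  have p4' : (m/2) * (‖w₀‖ * ‖Complex.log ((P:ℂ) + ζ)‖ + ‖L₀‖ * ‖ζ - z₀‖)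
      ≤ (m/2) * ((‖w₀‖ * M3 + ‖L₀‖ * C5) * (1+x)^2) := mul_le_mul_of_nonneg_left p4 hm2
  calc ‖(lE : ℂ) + (cl : ℂ) * (ζ - (a:ℂ))‖
        + ‖(β:ℂ) + (m:ℂ) * ((b:ℂ) - ζ)‖ * ‖Complex.log ((P:ℂ) + ζ)‖
        + (m/2) * (‖(P:ℂ) + ζ‖ * ‖Complex.log ((P:ℂ) + ζ)‖)
        + (m/2) * (‖w₀‖ * ‖Complex.log ((P:ℂ) + ζ)‖ + ‖L₀‖ * ‖ζ - z₀‖)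
      ≤ C1 * (1+x)^2 + (C2 * M3) * (1+x)^2 + m/2 * ((M2 * M3) * (1+x)^2)
        + m/2 * ((‖w₀‖ * M3 + ‖L₀‖ * C5) * (1+x)^2) := by
        exact add_le_add (add_le_add (add_le_add p1 p2) p3') p4'
    _ = (C1 + C2 * M3 + m/2 * (M2 * M3) + m/2 * (‖w₀‖ * M3 + ‖L₀‖ * C5)) * (1 + x)^2 := by
        ring

/-- Rademacher's Phragmén–Lindelöf-type interpolation theorem on a vertical strip. -/
theorem rademacher_interpolation
    (a b : ℝ) (hab : a < b) (h : ℂ → ℂ)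
    (hcont : ContinuousOn h {s : ℂ | a ≤ s.re ∧ s.re ≤ b})
    (hdiff : DifferentiableOn ℂ h {s : ℂ | a < s.re ∧ s.re < b})
    (A B γ : ℝ) (hA : 0 ≤ A) (hB : 0 ≤ B) (hγ0 : 0 < γ) (hγ : γ < Real.pi / (b - a))
    (hgrow : ∀ s : ℂ, a ≤ s.re → s.re ≤ b →
      ‖h s‖ ≤ A * Real.exp (B * Real.exp (γ * |s.im|)))
    (E F P α β : ℝ) (hE : 0 < E) (hF : 0 < F) (hPa : 0 < P + a) (hαβ : β ≤ α)
    (hla : ∀ t : ℝ, ‖h ((a : ℂ) + t * Complex.I)‖ ≤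
      E * ‖((P + a : ℝ) : ℂ) + t * Complex.I‖ ^ α)
    (hlb : ∀ t : ℝ, ‖h ((b : ℂ) + t * Complex.I)‖ ≤
      F * ‖((P + b : ℝ) : ℂ) + t * Complex.I‖ ^ β) :
    ∀ σ t : ℝ, a < σ → σ < b →
      ‖h ((σ : ℂ) + t * Complex.I)‖ ≤
        (E * ‖((P + σ : ℝ) : ℂ) + t * Complex.I‖ ^ α) ^ ((b - σ) / (b - a)) *
        (F * ‖((P + σ : ℝ) : ℂ) + t * Complex.I‖ ^ β) ^ ((σ - a) / (b - a)) := by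
  intro σ t hσa hσb
  have hba : (0:ℝ) < b - a := sub_pos.2 hab
  set m : ℝ := (α - β) / (b - a) with hm_def
  have hm : 0 ≤ m := div_nonneg (sub_nonneg.2 hαβ) hba.le
  set cl : ℝ := (Real.log F - Real.log E) / (b - a) with hcl_def
  set z₀ : ℂ := (σ:ℂ) + (t:ℂ) * Complex.I with hz₀_def
  have hz₀re : z₀.re = σ := by simp [hz₀_def]
  have hz₀im : z₀.im = t := by simp [hz₀_def]
  set w₀ : ℂ := (P:ℂ) + z₀ with hw₀_def
  have hw₀re : w₀.re = P + σ := by simp [hw₀_def, hz₀re]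
  have hw₀repos : 0 < w₀.re := by rw [hw₀re]; linarith
  have hw₀im : w₀.im = t := by simp [hw₀_def, hz₀im]
  set L₀ : ℂ := Complex.log w₀ with hL₀_def
  -- the auxiliary exponent
  set X : ℂ → ℂ := fun ζ =>
      -((Real.log E : ℂ) + (cl : ℂ) * (ζ - (a:ℂ)))
      - ((β:ℂ) + (m:ℂ) * ((b:ℂ) - ζ)) * Complex.log ((P:ℂ) + ζ)
      - ((m/2 : ℝ) : ℂ) * (((P:ℂ) + ζ) * Complex.log ((P:ℂ) + ζ))
      + ((m/2 : ℝ) : ℂ) * ((starRingEnd ℂ) w₀ * Complex.log ((P:ℂ) + ζ)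
          + (starRingEnd ℂ) L₀ * (ζ - z₀)) with hX_def
  set V : ℂ → ℂ := fun ζ => h ζ * Complex.exp (X ζ) with hV_def
  set lR : ℝ → ℝ := fun x => Real.log E + cl * (x - a) with hlR_def
  set qR : ℝ → ℝ := fun x => β + m * (b - x) with hqR_def
  set Rf : ℂ → ℝ := fun ζ =>
      (m/2) * ((starRingEnd ℂ) (ζ - z₀) * (Complex.log ((P:ℂ) + ζ) - L₀)).re with hRf_def
  -- modulus formula
  have habs : ∀ ζ : ℂ, ‖V ζ‖ = ‖h ζ‖ *
      Real.exp (-(lR ζ.re) - qR ζ.re * Real.log (‖(P:ℂ) + ζ‖) - Rf ζ) := by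
    intro ζ
    rw [hV_def]
    simp only [norm_mul, Complex.norm_exp]
    congr 2
    simp only [hX_def, hlR_def, hqR_def, hRf_def, Complex.sub_re, Complex.add_re,
      Complex.neg_re, Complex.mul_re, Complex.sub_im, Complex.add_im, Complex.mul_im,
      Complex.ofReal_re, Complex.ofReal_im, Complex.conj_re, Complex.conj_im,
      Complex.log_re, hL₀_def, Complex.I_re, Complex.I_im, hz₀re, hz₀im, hw₀re, hw₀im]
    ring
  -- nonnegativity of Rf on the closed strip
  have hRf0 : ∀ ζ : ℂ, a ≤ ζ.re → 0 ≤ Rf ζ := by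
    intro ζ hζ
    rw [hRf_def]
    apply mul_nonneg (by linarith)
    have h1 : 0 < ((P:ℂ) + ζ).re := by
      simp only [Complex.add_re, Complex.ofReal_re]
      linarith
    have := relog_mono w₀ ((P:ℂ) + ζ) hw₀repos h1
    have heq : (P:ℂ) + ζ - w₀ = ζ - z₀ := by rw [hw₀_def]; ring
    rwa [heq, ← hL₀_def] at this
  -- positivity facts about |P + ζ|
  have hawpos : ∀ ζ : ℂ, a ≤ ζ.re → (0:ℝ) < ‖(P:ℂ) + ζ‖ := by
    intro ζ hζ
    have h1 : (0:ℝ) < ((P:ℂ) + ζ).re := by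
      simp only [Complex.add_re, Complex.ofReal_re]; linarith
    exact lt_of_lt_of_le h1 (Complex.re_le_norm _)
  have hawge : ∀ ζ : ℂ, a ≤ ζ.re → P + a ≤ ‖(P:ℂ) + ζ‖ := by
    intro ζ hζ
    have h1 : P + a ≤ ((P:ℂ) + ζ).re := by
      simp only [Complex.add_re, Complex.ofReal_re]; linarith
    exact le_trans h1 (Complex.re_le_norm _)
  -- boundary estimates
  have hVa : ∀ z : ℂ, z.re = a → ‖V z‖ ≤ 1 := by
    intro z hza
    have hzeq : ((a:ℂ) + (z.im : ℂ) * Complex.I) = z := by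
      apply Complex.ext <;> simp [hza]
    have hPzeq : (((P + a : ℝ) : ℂ) + (z.im : ℂ) * Complex.I) = (P:ℂ) + z := by
      apply Complex.ext <;> simp [hza]
    have hbd : ‖h z‖ ≤ E * ‖(P:ℂ) + z‖ ^ α := by
      have := hla z.im
      rwa [hzeq, hPzeq] at this
    have haw : (0:ℝ) < ‖(P:ℂ) + z‖ := hawpos z (le_of_eq hza.symm)
    set aw : ℝ := ‖(P:ℂ) + z‖ with haw_def
    have hlRa : lR z.re = Real.log E := by rw [hlR_def]; simp [hza]
    have hqRa : qR z.re = α := by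
      rw [hqR_def]; simp only [hza]
      rw [hm_def]
      field_simp
      ring
    have hone : E * aw ^ α * Real.exp (-(Real.log E) - α * Real.log aw) = 1 := by
      rw [Real.rpow_def_of_pos haw, mul_assoc, ← Real.exp_add]
      have h9 : Real.log aw * α + (-(Real.log E) - α * Real.log aw) = -(Real.log E) := by ring
      rw [h9, Real.exp_neg, Real.exp_log hE]
      exact mul_inv_cancel₀ hE.ne'
    rw [habs z, hlRa, hqRa]
    have hsplit : Real.exp (-(Real.log E) - α * Real.log aw - Rf z)
        = Real.exp (-(Real.log E) - α * Real.log aw) * Real.exp (-(Rf z)) := by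
      rw [← Real.exp_add]; ring_nf
    rw [hsplit, ← mul_assoc]
    calc ‖h z‖ * Real.exp (-(Real.log E) - α * Real.log aw) * Real.exp (-(Rf z))
        ≤ E * aw ^ α * Real.exp (-(Real.log E) - α * Real.log aw) * Real.exp (-(Rf z)) := by
          apply mul_le_mul_of_nonneg_right _ (Real.exp_nonneg _)
          exact mul_le_mul_of_nonneg_right hbd (Real.exp_nonneg _)
      _ = Real.exp (-(Rf z)) := by rw [hone, one_mul]
      _ ≤ 1 := by
          rw [← Real.exp_zero]
          apply Real.exp_le_exp.2
          have := hRf0 z (le_of_eq hza.symm)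
          linarith
  have hVb : ∀ z : ℂ, z.re = b → ‖V z‖ ≤ 1 := by
    intro z hzb
    have hzeq : ((b:ℂ) + (z.im : ℂ) * Complex.I) = z := by
      apply Complex.ext <;> simp [hzb]
    have hPzeq : (((P + b : ℝ) : ℂ) + (z.im : ℂ) * Complex.I) = (P:ℂ) + z := by
      apply Complex.ext <;> simp [hzb]
    have hbd : ‖h z‖ ≤ F * ‖(P:ℂ) + z‖ ^ β := by
      have := hlb z.im
      rwa [hzeq, hPzeq] at this
    have haw : (0:ℝ) < ‖(P:ℂ) + z‖ := hawpos z (by rw [hzb]; exact hab.le)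
    set aw : ℝ := ‖(P:ℂ) + z‖ with haw_def
    have hlRb : lR z.re = Real.log F := by
      rw [hlR_def]; simp only [hzb]
      rw [hcl_def]
      field_simp
      ring
    have hqRb : qR z.re = β := by rw [hqR_def]; simp [hzb]
    have hone : F * aw ^ β * Real.exp (-(Real.log F) - β * Real.log aw) = 1 := by
      rw [Real.rpow_def_of_pos haw, mul_assoc, ← Real.exp_add]
      have h9 : Real.log aw * β + (-(Real.log F) - β * Real.log aw) = -(Real.log F) := by ring
      rw [h9, Real.exp_neg, Real.exp_log hF]
      exact mul_inv_cancel₀ hF.ne'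
    rw [habs z, hlRb, hqRb]
    have hsplit : Real.exp (-(Real.log F) - β * Real.log aw - Rf z)
        = Real.exp (-(Real.log F) - β * Real.log aw) * Real.exp (-(Rf z)) := by
      rw [← Real.exp_add]; ring_nf
    rw [hsplit, ← mul_assoc]
    calc ‖h z‖ * Real.exp (-(Real.log F) - β * Real.log aw) * Real.exp (-(Rf z))
        ≤ F * aw ^ β * Real.exp (-(Real.log F) - β * Real.log aw) * Real.exp (-(Rf z)) := by
          apply mul_le_mul_of_nonneg_right _ (Real.exp_nonneg _)
          exact mul_le_mul_of_nonneg_right hbd (Real.exp_nonneg _)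
      _ = Real.exp (-(Rf z)) := by rw [hone, one_mul]
      _ ≤ 1 := by
          rw [← Real.exp_zero]
          apply Real.exp_le_exp.2
          have := hRf0 z (by rw [hzb]; exact hab.le)
          linarith
  -- growth estimate for V
  obtain ⟨K, hK0, hKbound⟩ := aux_norm_bound a b P (Real.log E) cl β m w₀ L₀ z₀ hm hPa hab
  set D : ℝ := 1 + 2/γ + 4/γ^2 with hD_def
  have hD0 : 0 ≤ D := by rw [hD_def]; positivity
  have hVgrow : ∀ ζ : ℂ, a ≤ ζ.re → ζ.re ≤ b →
      ‖V ζ‖ ≤ A * Real.exp ((B + K * D) * Real.exp (γ * |ζ.im|)) := by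
    intro ζ hζa hζb
    have hXre : (X ζ).re ≤ K * D * Real.exp (γ * |ζ.im|) := by
      have h1 : (X ζ).re ≤ ‖X ζ‖ := Complex.re_le_norm _
      have h2 : ‖X ζ‖ ≤ K * (1 + |ζ.im|)^2 := hKbound ζ hζa hζb
      have h3 : (1 + |ζ.im|)^2 ≤ D * Real.exp (γ * |ζ.im|) := by
        rw [hD_def]
        exact sq_le_exp γ _ hγ0 (abs_nonneg _)
      have h4 : K * (1 + |ζ.im|)^2 ≤ K * (D * Real.exp (γ * |ζ.im|)) :=
        mul_le_mul_of_nonneg_left h3 hK0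
      calc (X ζ).re ≤ K * (1 + |ζ.im|)^2 := le_trans h1 h2
        _ ≤ K * (D * Real.exp (γ * |ζ.im|)) := h4
        _ = K * D * Real.exp (γ * |ζ.im|) := by ring
    have hnorm : ‖V ζ‖ = ‖h ζ‖ * Real.exp ((X ζ).re) := by
      rw [hV_def]
      simp [norm_mul, Complex.norm_exp]
    rw [hnorm]
    calc ‖h ζ‖ * Real.exp ((X ζ).re)
        ≤ (A * Real.exp (B * Real.exp (γ * |ζ.im|))) * Real.exp (K * D * Real.exp (γ * |ζ.im|)) := by
          apply mul_le_mul (hgrow ζ hζa hζb) (Real.exp_le_exp.2 hXre)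
            (Real.exp_nonneg _) (by positivity)
      _ = A * Real.exp ((B + K * D) * Real.exp (γ * |ζ.im|)) := by
          rw [mul_assoc, ← Real.exp_add]
          congr 2
          ring
  -- differentiability and continuity of V
  have hlogD : ∀ z : ℂ, a ≤ z.re → DifferentiableAt ℂ (fun ζ : ℂ => Complex.log ((P:ℂ) + ζ)) z := by
    intro z hz
    refine DifferentiableAt.clog (by fun_prop) ?_
    refine Complex.mem_slitPlane_iff.2 (Or.inl ?_)
    simp only [Complex.add_re, Complex.ofReal_re]
    linarith
  have hXD : ∀ z : ℂ, a ≤ z.re → DifferentiableAt ℂ X z := by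
    intro z hz
    have hl := hlogD z hz
    rw [hX_def]
    apply DifferentiableAt.add
    · apply DifferentiableAt.sub
      · apply DifferentiableAt.sub
        · exact ((differentiableAt_const _).add
            ((differentiableAt_id.sub (differentiableAt_const _)).const_mul _)).neg
        · exact ((differentiableAt_const _).add
            (((differentiableAt_const _).sub differentiableAt_id).const_mul _)).mul hl
      · exact (((differentiableAt_const _).add differentiableAt_id).mul hl).const_mul _
    · exact ((hl.const_mul _).add
        ((differentiableAt_id.sub (differentiableAt_const _)).const_mul _)).const_mul _
  have hXC : ∀ z : ℂ, a ≤ z.re → ContinuousAt X z := fun z hz => (hXD z hz).continuousAt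
  have hopen : IsOpen (Complex.re ⁻¹' Set.Ioo a b) := isOpen_Ioo.preimage Complex.continuous_re
  have hsetdiff : (Complex.re ⁻¹' Set.Ioo a b) = {s : ℂ | a < s.re ∧ s.re < b} := rfl
  have hVdc : DiffContOnCl ℂ V (Complex.re ⁻¹' Set.Ioo a b) := by
    constructor
    · intro z hz
      have hz' : a < z.re ∧ z.re < b := hz
      have hhd : DifferentiableAt ℂ h z := by
        apply hdiff.differentiableAt
        rw [← hsetdiff] at *
        exact hopen.mem_nhds hz
      exact ((hhd.mul ((hXD z hz'.1.le).cexp)).differentiableWithinAt)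
    · have hclos : closure (Complex.re ⁻¹' Set.Ioo a b) ⊆ Complex.re ⁻¹' Set.Icc a b :=
        closure_minimal (Set.preimage_mono Set.Ioo_subset_Icc_self)
          (isClosed_Icc.preimage Complex.continuous_re)
      refine ContinuousOn.mono ?_ hclos
      refine ContinuousOn.mul (hcont.mono ?_) ?_
      · intro z hz
        exact ⟨hz.1, hz.2⟩
      · intro z hz
        exact ((hXC z hz.1).cexp).continuousWithinAt
  -- Phragmén–Lindelöf
  have hz₀mem1 : a ≤ z₀.re := by rw [hz₀re]; exact hσa.le
  have hz₀mem2 : z₀.re ≤ b := by rw [hz₀re]; exact hσb.le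
  have hPL : ‖V z₀‖ ≤ 1 :=
    PhragmenLindelof.vertical_strip hVdc
      ⟨γ, hγ, B + K * D, by
        rw [Asymptotics.isBigO_iff]
        refine ⟨A, ?_⟩
        rw [Filter.eventually_inf_principal]
        apply Filter.Eventually.of_forall
        intro z hz
        have hz' : a < z.re ∧ z.re < b := hz
        rw [Real.norm_eq_abs, Real.abs_exp]
        exact hVgrow z hz'.1.le hz'.2.le⟩
      hVa hVb hz₀mem1 hz₀mem2
  -- unfold the conclusion at z₀
  have hRfz₀ : Rf z₀ = 0 := by
    rw [hRf_def]
    simp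
  set aw : ℝ := ‖(P:ℂ) + z₀‖ with haw_def
  have hawp : (0:ℝ) < aw := hawpos z₀ hz₀mem1
  have hmain : ‖h z₀‖ ≤ Real.exp (lR σ + qR σ * Real.log aw) := by
    have h1 := hPL
    rw [habs z₀, hz₀re, hRfz₀] at h1
    have h2 : Real.exp (-(lR σ) - qR σ * Real.log aw - 0) * Real.exp (lR σ + qR σ * Real.log aw) = 1 := by
      rw [← Real.exp_add]
      norm_num
    calc ‖h z₀‖
        = ‖h z₀‖ * (Real.exp (-(lR σ) - qR σ * Real.log aw - 0)
            * Real.exp (lR σ + qR σ * Real.log aw)) := by rw [h2, mul_one]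
      _ = (‖h z₀‖ * Real.exp (-(lR σ) - qR σ * Real.log aw - 0))
            * Real.exp (lR σ + qR σ * Real.log aw) := by ring
      _ ≤ 1 * Real.exp (lR σ + qR σ * Real.log aw) :=
          mul_le_mul_of_nonneg_right h1 (Real.exp_nonneg _)
      _ = Real.exp (lR σ + qR σ * Real.log aw) := one_mul _
  -- identify the right-hand side
  have haweq : ‖((P + σ : ℝ) : ℂ) + (t:ℂ) * Complex.I‖ = aw := by
    rw [haw_def]
    congr 1
    rw [hz₀_def]
    push_cast
    ring
  have hrhs : (E * aw ^ α) ^ ((b - σ) / (b - a)) * (F * aw ^ β) ^ ((σ - a) / (b - a))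
      = Real.exp (lR σ + qR σ * Real.log aw) := by
    have hEa : (0:ℝ) < E * aw ^ α := by positivity
    have hFb : (0:ℝ) < F * aw ^ β := by positivity
    rw [Real.rpow_def_of_pos hEa, Real.rpow_def_of_pos hFb, ← Real.exp_add]
    congr 1
    rw [Real.log_mul hE.ne' (by positivity), Real.log_mul hF.ne' (by positivity),
      Real.log_rpow hawp, Real.log_rpow hawp, hlR_def, hqR_def, hcl_def, hm_def]
    field_simp
    ring
  rw [haweq, hrhs]
  exact hmain
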